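/- Let V be a finite real signed Borel measure on ℝ with total variation norm ‖V‖ := |V|(ℝ). Let u : ℝ → ℂ be continuous, square-integrable, and locally absolutely continuous with a.e.-derivative u' ∈ L²(ℝ). Then u is bounded, |u|² is integrable with respect to |V|, and for every γ > 0: | ∫ |u(x)|² dV(x) | ≤ ‖V‖ ( (1/(2γ)) ‖u‖²_{L²} + (γ/2) ‖u'‖²_{L²} ). Consequently, for every h > 0, taking γ = h²/‖V‖: −(‖V‖²/(2h²)) ‖u‖²_{L²} + (h²/2) ‖u'‖²_{L²} ≤ h²‖u'‖²_{L²} + ∫ |u|² dV ≤ (‖V‖²/(2h²)) ‖u‖²_{L²} + (3h²/2) ‖u'‖²_{L²}. In particular the quadratic form q(u,u) = h²‖u'‖² + ∫|u|²dV is semibounded below. -/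

import Mathlib

open MeasureTheory

/-- Integral of a real-valued function against a finite real signed Borel measure. -/
noncomputable def signedIntR (V : SignedMeasure ℝ) (f : ℝ → ℝ) : ℝ :=
  (∫ x, f x ∂V.toJordanDecomposition.posPart) -
    ∫ x, f x ∂V.toJordanDecomposition.negPart

/-- Total variation norm ‖V‖ = |V|(ℝ) of a finite signed Borel measure. -/
noncomputable def VNorm (V : SignedMeasure ℝ) : ℝ :=
  (V.totalVariation Set.univ).toReal

open Set Complex Filter Topology

lemma integrable_conj' {w : ℝ → ℂ} {μ : Measure ℝ} (hw : Integrable w μ) :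
    Integrable (fun s => (starRingEnd ℂ) (w s)) μ := by
  simp only [starRingEnd_apply]
  exact hw.mono (continuous_star.comp_aestronglyMeasurable hw.aestronglyMeasurable)
    (Filter.Eventually.of_forall fun x => by simp)

lemma key_two_re (w : ℝ → ℂ) (a b : ℝ) (hw : IntegrableOn w (Set.Ioc a b) volume) :
    2 * (∫ t in Set.Ioc a b, (starRingEnd ℂ) (∫ s in Set.Ioc a b ∩ Set.Iic t, w s) * w t).re
      = ‖∫ s in Set.Ioc a b, w s‖ ^ 2 := by
  set μ := volume.restrict (Set.Ioc a b) with hμ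
  have hwμ : Integrable w μ := hw
  have hwc : Integrable (fun s => (starRingEnd ℂ) (w s)) μ := integrable_conj' hwμ
  set K : ℝ × ℝ → ℂ := fun p => (starRingEnd ℂ) (w p.1) * w p.2 with hK
  have hKi : Integrable K (μ.prod μ) := hwc.mul_prod hwμ
  set F : ℝ → ℝ → ℂ := fun s t => if s ≤ t then (starRingEnd ℂ) (w s) * w t else 0 with hFdef
  set G : ℝ → ℝ → ℂ := fun s t => if t ≤ s then (starRingEnd ℂ) (w s) * w t else 0 with hGdef
  have hFu : Function.uncurry F = ({p : ℝ × ℝ | p.1 ≤ p.2}).indicator K := by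
    funext p
    by_cases h : p.1 ≤ p.2 <;> simp [Function.uncurry, F, K, Set.indicator_apply, h]
  have hGu : Function.uncurry G = ({p : ℝ × ℝ | p.2 ≤ p.1}).indicator K := by
    funext p
    by_cases h : p.2 ≤ p.1 <;> simp [Function.uncurry, G, K, Set.indicator_apply, h]
  have hFi : Integrable (Function.uncurry F) (μ.prod μ) := by
    rw [hFu]; exact hKi.indicator (measurableSet_le measurable_fst measurable_snd)
  have hGi : Integrable (Function.uncurry G) (μ.prod μ) := by
    rw [hGu]; exact hKi.indicator (measurableSet_le measurable_snd measurable_fst)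
  set J : ℂ := ∫ t in Set.Ioc a b, (starRingEnd ℂ) (∫ s in Set.Ioc a b ∩ Set.Iic t, w s) * w t
    with hJdef
  have hJ1 : J = ∫ t, (∫ s, F s t ∂μ) ∂μ := by
    rw [hJdef]
    refine setIntegral_congr_fun measurableSet_Ioc (fun t ht => ?_)
    have h1 : ∫ s in Set.Ioc a b ∩ Set.Iic t, w s
        = ∫ s, (Set.Iic t).indicator w s ∂μ := by
      rw [hμ, setIntegral_indicator measurableSet_Iic]
    rw [h1, ← integral_conj, ← integral_mul_const]
    refine integral_congr_ae (Filter.Eventually.of_forall fun s => ?_)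
    by_cases h : s ≤ t <;> simp [F, Set.indicator_apply, h]
  have hJ2 : (starRingEnd ℂ) J = ∫ t, (∫ s, G s t ∂μ) ∂μ := by
    have swap1 : ∫ s, (∫ t, G s t ∂μ) ∂μ = ∫ t, (∫ s, G s t ∂μ) ∂μ :=
      integral_integral_swap hGi
    rw [← swap1, hJ1, ← integral_conj]
    refine integral_congr_ae (Filter.Eventually.of_forall fun t => ?_)
    show (starRingEnd ℂ) (∫ s, F s t ∂μ) = ∫ s, G t s ∂μ
    rw [← integral_conj]
    refine integral_congr_ae (Filter.Eventually.of_forall fun s => ?_)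
    show (starRingEnd ℂ) (F s t) = G t s
    by_cases h : s ≤ t <;> simp [F, G, h] <;> ring
  have hsum : J + (starRingEnd ℂ) J = ∫ t, (∫ s, K (s, t) ∂μ) ∂μ := by
    have hFi' : Integrable (fun t => ∫ s, F s t ∂μ) μ := hFi.integral_prod_right
    have hGi' : Integrable (fun t => ∫ s, G s t ∂μ) μ := hGi.integral_prod_right
    rw [hJ2, hJ1, ← integral_add hFi' hGi']
    have h1 : ∀ᵐ t ∂μ, Integrable (fun s => F s t) μ := hFi.prod_left_ae
    have h2 : ∀ᵐ t ∂μ, Integrable (fun s => G s t) μ := hGi.prod_left_ae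
    refine integral_congr_ae ?_
    filter_upwards [h1, h2] with t h1t h2t
    rw [← integral_add h1t h2t]
    refine integral_congr_ae ?_
    have hs : ∀ᵐ s ∂μ, s ≠ t := by
      rw [ae_iff]
      have : {s : ℝ | ¬ s ≠ t} = {t} := by ext s; simp
      rw [this, hμ, Measure.restrict_apply (measurableSet_singleton t)]
      exact measure_mono_null (Set.inter_subset_left) (measure_singleton t)
    filter_upwards [hs] with s hst
    rcases lt_or_gt_of_ne hst with h | h <;>
      simp [F, G, K, h.le, h.not_ge, not_le.mpr h]
  have hKint : ∫ t, (∫ s, K (s, t) ∂μ) ∂μ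
      = (starRingEnd ℂ) (∫ s, w s ∂μ) * ∫ t, w t ∂μ := by
    have : ∀ t, (∫ s, K (s, t) ∂μ) = (∫ s, (starRingEnd ℂ) (w s) ∂μ) * w t := by
      intro t; rw [← integral_mul_const]
    simp only [this]
    rw [integral_const_mul, integral_conj]
  have hfinal : J + (starRingEnd ℂ) J = ((‖∫ s in Set.Ioc a b, w s‖ : ℝ) ^ 2 : ℝ) := by
    rw [hsum, hKint]
    have := Complex.normSq_eq_conj_mul_self (z := ∫ s, w s ∂μ)
    rw [← this]
    rw [Complex.normSq_eq_norm_sq]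
  have h2 := congrArg Complex.re hfinal
  rw [Complex.add_re, Complex.conj_re, Complex.ofReal_re] at h2
  show 2 * J.re = ‖∫ s in Set.Ioc a b, w s‖ ^ 2
  linarith

lemma interval_int {u' : ℝ → ℂ} (hu'L2 : MemLp u' 2 volume) :
    ∀ a b : ℝ, IntervalIntegrable u' volume a b := by
  intro a b
  have hli : LocallyIntegrable u' volume := hu'L2.locallyIntegrable one_le_two
  rw [intervalIntegrable_iff]
  exact ((hli.locallyIntegrableOn _).integrableOn_isCompact isCompact_uIcc).mono_set
    Set.uIoc_subset_uIcc

lemma sq_norm_ftc (u u' : ℝ → ℂ) (hcont : Continuous u)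
    (hftc : ∀ x : ℝ, u x = u 0 + ∫ t in (0:ℝ)..x, u' t)
    (hu'meas : AEStronglyMeasurable u' volume)
    (hloc : ∀ a b : ℝ, IntervalIntegrable u' volume a b)
    {a b : ℝ} (hab : a ≤ b) :
    ‖u b‖ ^ 2 - ‖u a‖ ^ 2
      = 2 * ∫ t in Set.Ioc a b, ((starRingEnd ℂ) (u t) * u' t).re := by
  have hS : IntegrableOn u' (Set.Ioc a b) volume := (hloc a b).1
  have huf : ∀ t, a ≤ t → u t = u a + ∫ s in Set.Ioc a t, u' s := by
    intro t ht
    have h3 := intervalIntegral.integral_interval_sub_left (hloc 0 t) (hloc 0 a)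
    rw [intervalIntegral.integral_of_le ht] at h3
    rw [hftc t, hftc a, ← h3]; ring
  have hbd : u b - u a = ∫ s in Set.Ioc a b, u' s := by rw [huf b hab]; ring
  obtain ⟨C, hC⟩ : ∃ C, ∀ x ∈ Set.Icc a b, ‖u x‖ ≤ C :=
    (isCompact_Icc).exists_bound_of_continuousOn hcont.continuousOn
  have haesm : AEStronglyMeasurable (fun t => (starRingEnd ℂ) (u t) * u' t)
      (volume.restrict (Set.Ioc a b)) := by
    simp only [starRingEnd_apply]
    exact ((continuous_star.comp hcont).aestronglyMeasurable).mul hu'meas.restrict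
  have hInt1 : IntegrableOn (fun t => (starRingEnd ℂ) (u t) * u' t) (Set.Ioc a b) volume := by
    refine Integrable.mono' (hS.norm.const_mul C) haesm ?_
    rw [ae_restrict_iff' measurableSet_Ioc]
    refine Filter.Eventually.of_forall fun t ht => ?_
    rw [norm_mul, RCLike.norm_conj]
    exact mul_le_mul_of_nonneg_right (hC t (Set.Ioc_subset_Icc_self ht)) (norm_nonneg _)
  have hInt2 : IntegrableOn (fun t => (starRingEnd ℂ) (u a) * u' t) (Set.Ioc a b) volume :=
    hS.const_mul _
  set Jterm : ℂ := ∫ t in Set.Ioc a b,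
      (starRingEnd ℂ) (∫ s in Set.Ioc a b ∩ Set.Iic t, u' s) * u' t with hJdef
  have hsplit : ∫ t in Set.Ioc a b, (starRingEnd ℂ) (u t) * u' t
      = (starRingEnd ℂ) (u a) * (∫ t in Set.Ioc a b, u' t) + Jterm := by
    have heq : ∀ t ∈ Set.Ioc a b,
        (starRingEnd ℂ) (∫ s in Set.Ioc a b ∩ Set.Iic t, u' s) * u' t
          = (starRingEnd ℂ) (u t) * u' t - (starRingEnd ℂ) (u a) * u' t := by
      intro t ht
      have h1 : Set.Ioc a b ∩ Set.Iic t = Set.Ioc a t := by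
        rw [Set.Ioc_inter_Iic, min_eq_right ht.2]
      have h2 : (∫ s in Set.Ioc a t, u' s) = u t - u a := by rw [huf t ht.1.le]; ring
      rw [h1, h2, map_sub]; ring
    have h3 : Jterm = ∫ t in Set.Ioc a b,
        ((starRingEnd ℂ) (u t) * u' t - (starRingEnd ℂ) (u a) * u' t) :=
      setIntegral_congr_fun measurableSet_Ioc heq
    rw [h3, integral_sub hInt1 hInt2, integral_const_mul]
    ring
  have key := key_two_re u' a b hS
  rw [← hJdef] at key
  have hre : ∫ t in Set.Ioc a b, ((starRingEnd ℂ) (u t) * u' t).re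
      = (∫ t in Set.Ioc a b, (starRingEnd ℂ) (u t) * u' t).re := by
    simpa [RCLike.re_to_complex] using integral_re hInt1
  have halg : ∀ z d : ℂ, ‖z + d‖ ^ 2 - ‖z‖ ^ 2 = 2 * ((starRingEnd ℂ) z * d).re + ‖d‖ ^ 2 := by
    intro z d
    simp only [Complex.sq_norm, Complex.normSq_apply, Complex.mul_re,
      Complex.add_re, Complex.add_im, Complex.conj_re, Complex.conj_im]
    ring
  have e1 : ‖u b‖ ^ 2 - ‖u a‖ ^ 2
      = 2 * ((starRingEnd ℂ) (u a) * (u b - u a)).re + ‖u b - u a‖ ^ 2 := by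
    have := halg (u a) (u b - u a)
    simpa using this
  have e2 : ‖u b - u a‖ ^ 2 = 2 * Jterm.re := by rw [hbd]; exact key.symm
  have e3 : (∫ t in Set.Ioc a b, (starRingEnd ℂ) (u t) * u' t).re
      = ((starRingEnd ℂ) (u a) * (u b - u a)).re + Jterm.re := by
    rw [hsplit, ← hbd, Complex.add_re]
  rw [hre.symm] at e3
  linarith

lemma lim_zero_top {g : ℝ → ℝ} (hg : Integrable g volume) (hnn : ∀ t, 0 ≤ g t) {L : ℝ}
    (h : Tendsto g atTop (𝓝 L)) : L = 0 := by
  have hL0 : 0 ≤ L := ge_of_tendsto h (Eventually.of_forall hnn)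
  by_contra hL
  have hLpos : 0 < L := lt_of_le_of_ne hL0 (Ne.symm hL)
  have hev : ∀ᶠ t in atTop, L / 2 < g t := h.eventually (lt_mem_nhds (by linarith))
  obtain ⟨R, hR⟩ := eventually_atTop.mp hev
  have hconst : Integrable (fun _ : ℝ => L / 2) (volume.restrict (Set.Ici R)) := by
    refine Integrable.mono' hg.integrableOn aestronglyMeasurable_const ?_
    rw [ae_restrict_iff' measurableSet_Ici]
    refine Eventually.of_forall fun t ht => ?_
    rw [Real.norm_eq_abs, abs_of_pos (by linarith)]
    exact (hR t ht).le
  rw [integrable_const_iff] at hconst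
  rcases hconst with h1 | h2
  · linarith
  · rw [isFiniteMeasure_restrict, Real.volume_Ici] at h2
    exact absurd h2 (by simp)

lemma lim_zero_bot {g : ℝ → ℝ} (hg : Integrable g volume) (hnn : ∀ t, 0 ≤ g t) {L : ℝ}
    (h : Tendsto g atBot (𝓝 L)) : L = 0 := by
  have hL0 : 0 ≤ L := ge_of_tendsto h (Eventually.of_forall hnn)
  by_contra hL
  have hLpos : 0 < L := lt_of_le_of_ne hL0 (Ne.symm hL)
  have hev : ∀ᶠ t in atBot, L / 2 < g t := h.eventually (lt_mem_nhds (by linarith))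
  obtain ⟨R, hR⟩ := eventually_atBot.mp hev
  have hconst : Integrable (fun _ : ℝ => L / 2) (volume.restrict (Set.Iic R)) := by
    refine Integrable.mono' hg.integrableOn aestronglyMeasurable_const ?_
    rw [ae_restrict_iff' measurableSet_Iic]
    refine Eventually.of_forall fun t ht => ?_
    rw [Real.norm_eq_abs, abs_of_pos (by linarith)]
    exact (hR t ht).le
  rw [integrable_const_iff] at hconst
  rcases hconst with h1 | h2
  · linarith
  · rw [isFiniteMeasure_restrict, Real.volume_Iic] at h2
    exact absurd h2 (by simp)

lemma sup_bound (u u' : ℝ → ℂ) (hcont : Continuous u)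
    (huL2 : MemLp u 2 volume)
    (hftc : ∀ x : ℝ, u x = u 0 + ∫ t in (0:ℝ)..x, u' t)
    (hu'meas : AEStronglyMeasurable u' volume)
    (hu'L2 : MemLp u' 2 volume)
    (hloc : ∀ a b : ℝ, IntervalIntegrable u' volume a b)
    {γ : ℝ} (hγ : 0 < γ) (x : ℝ) :
    ‖u x‖ ^ 2 ≤ (1 / (2 * γ)) * (∫ t : ℝ, ‖u t‖ ^ 2) + (γ / 2) * ∫ t : ℝ, ‖u' t‖ ^ 2 := by
  set φ : ℝ → ℝ := fun t => ((starRingEnd ℂ) (u t) * u' t).re with hφdef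
  have hIu : Integrable (fun t => ‖u t‖ ^ 2) volume := huL2.norm.integrable_sq
  have hIu' : Integrable (fun t => ‖u' t‖ ^ 2) volume := hu'L2.norm.integrable_sq
  have hφm : AEStronglyMeasurable φ volume := by
    simp only [hφdef, starRingEnd_apply]
    exact Complex.continuous_re.comp_aestronglyMeasurable
      (((continuous_star.comp hcont).aestronglyMeasurable).mul hu'meas)
  have hφbound : ∀ t, |φ t| ≤ ‖u t‖ * ‖u' t‖ := by
    intro t
    calc |φ t| ≤ ‖(starRingEnd ℂ) (u t) * u' t‖ := Complex.abs_re_le_norm _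
    _ = ‖u t‖ * ‖u' t‖ := by rw [norm_mul, RCLike.norm_conj]
  have hφint : Integrable φ volume := by
    refine Integrable.mono' (g := fun t => 1/2 * ‖u t‖ ^ 2 + 1/2 * ‖u' t‖ ^ 2)
      ((hIu.const_mul (1/2)).add (hIu'.const_mul (1/2)))
      hφm (Eventually.of_forall fun t => ?_)
    rw [Real.norm_eq_abs]
    have h1 := hφbound t
    nlinarith [sq_nonneg (‖u t‖ - ‖u' t‖), norm_nonneg (u t), norm_nonneg (u' t)]
  have hφabs : Integrable (fun t => |φ t|) volume := hφint.abs
  set g : ℝ → ℝ := fun t => ‖u t‖ ^ 2 with hgdef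
  have hgnn : ∀ t, 0 ≤ g t := fun t => by positivity
  have htop : Tendsto (fun t : ℝ => ∫ s in x..t, φ s) atTop (𝓝 (∫ s in Set.Ioi x, φ s)) :=
    intervalIntegral_tendsto_integral_Ioi x hφint.integrableOn tendsto_id
  have heq₁ : ∀ᶠ t in atTop, g x + 2 * ∫ s in x..t, φ s = g t := by
    filter_upwards [eventually_ge_atTop x] with t ht
    have := sq_norm_ftc u u' hcont hftc hu'meas hloc ht
    rw [intervalIntegral.integral_of_le ht]
    simp only [hgdef]
    linarith
  have htg : Tendsto g atTop (𝓝 (g x + 2 * ∫ s in Set.Ioi x, φ s)) :=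
    (tendsto_const_nhds.add (htop.const_mul 2)).congr' heq₁
  have hLtop : g x + 2 * ∫ s in Set.Ioi x, φ s = 0 := lim_zero_top hIu hgnn htg
  have hbot : Tendsto (fun t : ℝ => ∫ s in t..x, φ s) atBot (𝓝 (∫ s in Set.Iic x, φ s)) :=
    intervalIntegral_tendsto_integral_Iic x hφint.integrableOn tendsto_id
  have heq₂ : ∀ᶠ t in atBot, g x - 2 * ∫ s in t..x, φ s = g t := by
    filter_upwards [eventually_le_atBot x] with t ht
    have := sq_norm_ftc u u' hcont hftc hu'meas hloc ht
    rw [intervalIntegral.integral_of_le ht]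
    simp only [hgdef]
    linarith
  have hbg : Tendsto g atBot (𝓝 (g x - 2 * ∫ s in Set.Iic x, φ s)) :=
    (tendsto_const_nhds.sub (hbot.const_mul 2)).congr' heq₂
  have hLbot : g x - 2 * ∫ s in Set.Iic x, φ s = 0 := lim_zero_bot hIu hgnn hbg
  have hsplit : (∫ s in Set.Iic x, |φ s|) + ∫ s in Set.Ioi x, |φ s| = ∫ s : ℝ, |φ s| :=
    intervalIntegral.integral_Iic_add_Ioi hφabs.integrableOn hφabs.integrableOn
  have h1 : ∫ s in Set.Iic x, φ s ≤ ∫ s in Set.Iic x, |φ s| :=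
    integral_mono hφint.integrableOn hφabs.integrableOn fun t => le_abs_self _
  have h2 : -∫ s in Set.Ioi x, φ s ≤ ∫ s in Set.Ioi x, |φ s| := by
    rw [← integral_neg]
    exact integral_mono hφint.integrableOn.neg hφabs.integrableOn fun t => neg_le_abs _
  have hsup : g x ≤ ∫ t : ℝ, |φ t| := by linarith
  have hmono : ∫ t : ℝ, |φ t|
      ≤ ∫ t : ℝ, ((1 / (2 * γ)) * ‖u t‖ ^ 2 + (γ / 2) * ‖u' t‖ ^ 2) := by
    refine integral_mono hφabs ((hIu.const_mul _).add (hIu'.const_mul _)) fun t => ?_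
    have hb := hφbound t
    have h3 : (0:ℝ) < 2 * γ := by linarith
    have h4 : ‖u t‖ * ‖u' t‖ ≤ (‖u t‖ ^ 2 + γ ^ 2 * ‖u' t‖ ^ 2) / (2 * γ) := by
      rw [le_div_iff₀ h3]
      nlinarith [sq_nonneg (‖u t‖ - γ * ‖u' t‖)]
    have h5 : (‖u t‖ ^ 2 + γ ^ 2 * ‖u' t‖ ^ 2) / (2 * γ)
        = 1 / (2 * γ) * ‖u t‖ ^ 2 + γ / 2 * ‖u' t‖ ^ 2 := by
      field_simp
    show |φ t| ≤ 1 / (2 * γ) * ‖u t‖ ^ 2 + γ / 2 * ‖u' t‖ ^ 2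
    linarith
  rw [integral_add (hIu.const_mul _) (hIu'.const_mul _), integral_const_mul,
    integral_const_mul] at hmono
  calc ‖u x‖ ^ 2 = g x := rfl
  _ ≤ ∫ t : ℝ, |φ t| := hsup
  _ ≤ _ := hmono

/-- the form bound (3.5)–(3.6): for `u ∈ H¹(ℝ)`,
`|∫ |u|² dV| ≤ ‖V‖ ((1/2γ)‖u‖² + (γ/2)‖u'‖²)` for every `γ > 0`, and the
quadratic form `h²‖u'‖² + ∫|u|²dV` is sandwiched accordingly; in particular it
is semibounded. -/
theorem form_bound
    (V : SignedMeasure ℝ)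
    (u u' : ℝ → ℂ)
    (hcont : Continuous u)
    (huL2 : MemLp u 2 volume)
    (hftc : ∀ x : ℝ, u x = u 0 + ∫ t in (0:ℝ)..x, u' t)
    (hu'meas : AEStronglyMeasurable u' volume)
    (hu'L2 : MemLp u' 2 volume) :
    (∃ M : ℝ, ∀ x : ℝ, ‖u x‖ ≤ M) ∧
    Integrable (fun x : ℝ => ‖u x‖ ^ 2) V.totalVariation ∧
    (∀ γ : ℝ, 0 < γ →
      |signedIntR V (fun x => ‖u x‖ ^ 2)|
        ≤ VNorm V * ((1 / (2 * γ)) * (∫ x : ℝ, ‖u x‖ ^ 2) +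
            (γ / 2) * ∫ x : ℝ, ‖u' x‖ ^ 2)) ∧
    (∀ h : ℝ, 0 < h →
      (-(VNorm V ^ 2 / (2 * h ^ 2)) * (∫ x : ℝ, ‖u x‖ ^ 2) +
          (h ^ 2 / 2) * ∫ x : ℝ, ‖u' x‖ ^ 2
        ≤ h ^ 2 * (∫ x : ℝ, ‖u' x‖ ^ 2) + signedIntR V (fun x => ‖u x‖ ^ 2)) ∧
      (h ^ 2 * (∫ x : ℝ, ‖u' x‖ ^ 2) + signedIntR V (fun x => ‖u x‖ ^ 2)
        ≤ (VNorm V ^ 2 / (2 * h ^ 2)) * (∫ x : ℝ, ‖u x‖ ^ 2) +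
            (3 * h ^ 2 / 2) * ∫ x : ℝ, ‖u' x‖ ^ 2)) := by
  have hloc := interval_int hu'L2
  have hkey : ∀ γ : ℝ, 0 < γ → ∀ x : ℝ,
      ‖u x‖ ^ 2 ≤ (1 / (2 * γ)) * (∫ t : ℝ, ‖u t‖ ^ 2) + (γ / 2) * ∫ t : ℝ, ‖u' t‖ ^ 2 :=
    fun γ hγ x => sup_bound u u' hcont huL2 hftc hu'meas hu'L2 hloc hγ x
  have hInonneg : (0:ℝ) ≤ ∫ x : ℝ, ‖u x‖ ^ 2 := integral_nonneg fun x => by positivity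
  have hI'nonneg : (0:ℝ) ≤ ∫ x : ℝ, ‖u' x‖ ^ 2 := integral_nonneg fun x => by positivity
  set I : ℝ := ∫ x : ℝ, ‖u x‖ ^ 2 with hIdef
  set I' : ℝ := ∫ x : ℝ, ‖u' x‖ ^ 2 with hI'def
  set B : ℝ := (1 / (2 * 1)) * I + (1 / 2) * I' with hBdef
  have hB : ∀ x : ℝ, ‖u x‖ ^ 2 ≤ B := fun x => hkey 1 one_pos x
  have hBnn : 0 ≤ B := le_trans (by positivity) (hB 0)
  have hg_cont : Continuous (fun x : ℝ => ‖u x‖ ^ 2) := hcont.norm.pow 2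
  set P := V.toJordanDecomposition.posPart with hPdef
  set N := V.toJordanDecomposition.negPart with hNdef
  haveI : IsFiniteMeasure V.totalVariation := by
    rw [SignedMeasure.totalVariation]; infer_instance
  have hboundMeas : ∀ μ : Measure ℝ, IsFiniteMeasure μ →
      Integrable (fun x : ℝ => ‖u x‖ ^ 2) μ := by
    intro μ hμ
    refine Integrable.mono' (integrable_const B) hg_cont.aestronglyMeasurable
      (Eventually.of_forall fun x => ?_)
    have habs : |‖u x‖ ^ 2| = ‖u x‖ ^ 2 := abs_of_nonneg (by positivity)
    rw [Real.norm_eq_abs, habs]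
    exact hB x
  have hTVint : Integrable (fun x : ℝ => ‖u x‖ ^ 2) V.totalVariation :=
    hboundMeas _ inferInstance
  have hPint : Integrable (fun x : ℝ => ‖u x‖ ^ 2) P := hboundMeas _ inferInstance
  have hNint : Integrable (fun x : ℝ => ‖u x‖ ^ 2) N := hboundMeas _ inferInstance
  have hVnorm_eq : VNorm V = (P Set.univ).toReal + (N Set.univ).toReal := by
    rw [VNorm, SignedMeasure.totalVariation, Measure.add_apply,
      ENNReal.toReal_add (measure_ne_top _ _) (measure_ne_top _ _)]
  have hpRnn : (0:ℝ) ≤ (P Set.univ).toReal := ENNReal.toReal_nonneg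
  have hnRnn : (0:ℝ) ≤ (N Set.univ).toReal := ENNReal.toReal_nonneg
  have h0P : 0 ≤ ∫ x, ‖u x‖ ^ 2 ∂P := integral_nonneg fun x => by positivity
  have h0N : 0 ≤ ∫ x, ‖u x‖ ^ 2 ∂N := integral_nonneg fun x => by positivity
  have hpart3 : ∀ γ : ℝ, 0 < γ →
      |signedIntR V (fun x => ‖u x‖ ^ 2)|
        ≤ VNorm V * ((1 / (2 * γ)) * I + (γ / 2) * I') := by
    intro γ hγ
    set Cγ : ℝ := (1 / (2 * γ)) * I + (γ / 2) * I' with hCγdef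
    have hCγ0 : 0 ≤ Cγ :=
      add_nonneg (mul_nonneg (by positivity) hInonneg) (mul_nonneg (by positivity) hI'nonneg)
    have haP : ∫ x, ‖u x‖ ^ 2 ∂P ≤ Cγ * (P Set.univ).toReal := by
      calc ∫ x, ‖u x‖ ^ 2 ∂P ≤ ∫ _x, Cγ ∂P :=
            integral_mono hPint (integrable_const _) (hkey γ hγ)
      _ = Cγ * (P Set.univ).toReal := by rw [integral_const, smul_eq_mul, mul_comm, measureReal_def]
    have haN : ∫ x, ‖u x‖ ^ 2 ∂N ≤ Cγ * (N Set.univ).toReal := by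
      calc ∫ x, ‖u x‖ ^ 2 ∂N ≤ ∫ _x, Cγ ∂N :=
            integral_mono hNint (integrable_const _) (hkey γ hγ)
      _ = Cγ * (N Set.univ).toReal := by rw [integral_const, smul_eq_mul, mul_comm, measureReal_def]
    rw [signedIntR, hVnorm_eq, abs_sub_le_iff]
    have e1 : ((P Set.univ).toReal + (N Set.univ).toReal) * Cγ
        = Cγ * (P Set.univ).toReal + Cγ * (N Set.univ).toReal := by ring
    constructor
    · rw [e1]
      have := mul_nonneg hCγ0 hnRnn
      linarith
    · rw [e1]
      have := mul_nonneg hCγ0 hpRnn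
      linarith
  refine ⟨⟨Real.sqrt B, fun x => ?_⟩, hTVint, hpart3, ?_⟩
  · rw [← Real.sqrt_sq (norm_nonneg (u x))]
    exact Real.sqrt_le_sqrt (hB x)
  · intro h hh
    have hVnn : 0 ≤ VNorm V := by rw [hVnorm_eq]; linarith
    rcases eq_or_lt_of_le hVnn with hV0 | hVpos
    · have h3 := hpart3 1 one_pos
      rw [← hV0, zero_mul] at h3
      have hS0 : signedIntR V (fun x => ‖u x‖ ^ 2) = 0 :=
        abs_eq_zero.mp (le_antisymm h3 (abs_nonneg _))
      rw [hS0, ← hV0]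
      constructor
      · have : -((0:ℝ) ^ 2 / (2 * h ^ 2)) * I = 0 := by norm_num
        rw [this]
        nlinarith [mul_nonneg (sq_nonneg h) hI'nonneg]
      · have : ((0:ℝ) ^ 2 / (2 * h ^ 2)) * I = 0 := by norm_num
        rw [this]
        nlinarith [mul_nonneg (sq_nonneg h) hI'nonneg]
    · have hγpos : 0 < h ^ 2 / VNorm V := div_pos (by positivity) hVpos
      have h3 := hpart3 _ hγpos
      have hVne : VNorm V ≠ 0 := ne_of_gt hVpos
      have hhne : h ≠ 0 := ne_of_gt hh
      have heq : VNorm V * ((1 / (2 * (h ^ 2 / VNorm V))) * I + ((h ^ 2 / VNorm V) / 2) * I')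
          = VNorm V ^ 2 / (2 * h ^ 2) * I + h ^ 2 / 2 * I' := by
        field_simp
      rw [heq, abs_le] at h3
      constructor
      · linarith [h3.1]
      · linarith [h3.2]
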